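/- Consider a triangular array: for each n, a probability space carrying sub-σ-algebras 𝓕₁ⁿ ⊆ 𝓕₂ⁿ, integrable 𝓕₁ⁿ-measurable random variables F̂ⁿ,¹,…,F̂ⁿ,ᴹ⁽ⁿ⁾, integrable 𝓕₂ⁿ-measurable random variables F̂*ⁿ,¹,…,F̂*ⁿ,ᴹ⁽ⁿ⁾, and selection indices π(1),…,π(I(n)) i.i.d. uniform on {1,…,M(n)} independent of 𝓕₂ⁿ, with I(n) ≤ M(n). Suppose that the conditional biases are uniformly o_p(n⁻¹), i.e. writing Rₙᵐ = E(F̂*ⁿ,ᵐ | 𝓕₁ⁿ) − F̂ⁿ,ᵐ, one has max_{1 ≤ m ≤ M(n)} n·|Rₙᵐ| → 0 in probability as n → ∞. Then E( √n·(F̄*_{I(n)} − F̄_{M(n)}) | 𝓕₁ⁿ ) → 0 in probability as n → ∞, where F̄_{M(n)} = (1/M(n))Σ_{m=1}^{M(n)} F̂ⁿ,ᵐ and F̄*_{I(n)} = (1/I(n))Σ_{l=1}^{I(n)} F̂*ⁿ,π(l). -/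

import Mathlib

open MeasureTheory ProbabilityTheory Finset Filter

lemma aux_indicator_condexp {Ω : Type*} {mΩ : MeasurableSpace Ω} {μ : Measure Ω}
    [IsProbabilityMeasure μ] {m₁ m₂ mA : MeasurableSpace Ω}
    (h12 : m₁ ≤ m₂) (h2 : m₂ ≤ mΩ) (hAle : mA ≤ mΩ)
    {A : Set Ω} (hA : MeasurableSet[mA] A)
    {f : Ω → ℝ} (hf : Integrable f μ) (hfm : StronglyMeasurable[m₂] f)
    (hind : Indep mA m₂ μ) :
    μ[A.indicator f | m₁] =ᵐ[μ] (μ A).toReal • μ[f | m₁] := by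
  have hAmΩ : MeasurableSet[mΩ] A := hAle _ hA
  letI : MeasurableSpace Ω := mΩ
  have hc : μ[A.indicator (fun _ => (1:ℝ)) | m₂] =ᵐ[μ] fun _ => (μ A).toReal := by
    refine (condExp_indep_eq hAle h2 (stronglyMeasurable_const.indicator hA) hind).trans ?_
    refine Filter.EventuallyEq.of_eq ?_
    funext ω
    rw [show (fun _ => (1:ℝ)) = (1 : Ω → ℝ) from rfl,
      integral_indicator_one (μ := μ) hAmΩ]
    rfl
  have hmul : A.indicator f = f * A.indicator (fun _ => (1:ℝ)) := by
    funext ω; by_cases h : ω ∈ A <;> simp [Set.indicator_apply, h]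
  have hint : Integrable (f * A.indicator fun _ => (1:ℝ)) μ := by
    rw [← hmul]; exact Integrable.indicator (μ := μ) hf hAmΩ
  have h2' : μ[A.indicator f | m₂] =ᵐ[μ] (μ A).toReal • f := by
    rw [hmul]
    refine (condExp_mul_of_stronglyMeasurable_left hfm hint
      (Integrable.indicator (μ := μ) (integrable_const (1:ℝ)) hAmΩ)).trans ?_
    filter_upwards [hc] with ω hω
    simp only [Pi.mul_apply, hω, Pi.smul_apply, smul_eq_mul]
    ring
  calc μ[A.indicator f|m₁] =ᵐ[μ] μ[μ[A.indicator f|m₂]|m₁] :=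
        (condExp_condExp_of_le h12 h2).symm
    _ =ᵐ[μ] μ[(μ A).toReal • f|m₁] := condExp_congr_ae h2'
    _ =ᵐ[μ] (μ A).toReal • μ[f|m₁] := condExp_smul _ _ _

set_option maxHeartbeats 1000000 in
/-- if the conditional biases `Rₙᵐ = E(F̂*ⁿ,ᵐ | 𝓕₁ⁿ) − F̂ⁿ,ᵐ`
satisfy `max_m n·|Rₙᵐ| → 0` in probability, then
`E(√n·(F̄*_{I(n)} − F̄_{M(n)}) | 𝓕₁ⁿ) → 0` in probability. -/
theorem condexp_wbmi_tendsto_zero_inProb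
    (Ω : ℕ → Type*) [mΩ : ∀ n, MeasurableSpace (Ω n)]
    (μ : ∀ n, Measure (Ω n)) [∀ n, IsProbabilityMeasure (μ n)]
    (𝓕₁ 𝓕₂ : ∀ n, MeasurableSpace (Ω n))
    (h12 : ∀ n, 𝓕₁ n ≤ 𝓕₂ n) (h2 : ∀ n, 𝓕₂ n ≤ mΩ n)
    (M I : ℕ → ℕ) (hI : ∀ n, 0 < I n) (hIM : ∀ n, I n ≤ M n)
    (F Fstar : ∀ n, Fin (M n) → Ω n → ℝ)
    (hFint : ∀ n m, Integrable (F n m) (μ n))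
    (hFmeas : ∀ n m, StronglyMeasurable[𝓕₁ n] (F n m))
    (hFstarint : ∀ n m, Integrable (Fstar n m) (μ n))
    (hFstarmeas : ∀ n m, StronglyMeasurable[𝓕₂ n] (Fstar n m))
    (π : ∀ n, Fin (I n) → Ω n → Fin (M n))
    (hπmeas : ∀ n l, Measurable (π n l))
    (hiid : ∀ n, iIndepFun (π n) (μ n))
    (hunif : ∀ n l m, μ n (π n l ⁻¹' {m}) = (M n : ENNReal)⁻¹)
    (hindep : ∀ n,
      Indep (⨆ l, MeasurableSpace.comap (π n l) inferInstance) (𝓕₂ n) (μ n))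
    (hbias : ∀ ε : ℝ, 0 < ε →
      Tendsto (fun n => μ n {ω | ∃ m, ε ≤
          (n : ℝ) * abs (condExp (𝓕₁ n) (μ n) (Fstar n m) ω - F n m ω)})
        atTop (nhds 0)) :
    ∀ ε : ℝ, 0 < ε →
      Tendsto (fun n => μ n {ω | ε ≤
          abs (condExp (𝓕₁ n) (μ n) (fun ω' => Real.sqrt n *
              ((1 / (I n) : ℝ) * ∑ l, Fstar n (π n l ω') ω'
                - (1 / (M n) : ℝ) * ∑ m, F n m ω')) ω)})
        atTop (nhds 0) := by
  -- the key a.e. identity for the conditional expectation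
  have key : ∀ n, condExp (𝓕₁ n) (μ n) (fun ω' => Real.sqrt n *
              ((1 / (I n) : ℝ) * ∑ l, Fstar n (π n l ω') ω'
                - (1 / (M n) : ℝ) * ∑ m, F n m ω')) =ᵐ[μ n]
      fun ω => Real.sqrt n * ((M n : ℝ)⁻¹ *
        ∑ m, (condExp (𝓕₁ n) (μ n) (Fstar n m) ω - F n m ω)) := by
    intro n
    letI : MeasurableSpace (Ω n) := mΩ n
    have hM : 0 < M n := lt_of_lt_of_le (hI n) (hIM n)
    have hMne : (M n : ℝ) ≠ 0 := Nat.cast_ne_zero.mpr hM.ne'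
    have hIne : (I n : ℝ) ≠ 0 := Nat.cast_ne_zero.mpr (hI n).ne'
    have h1 : 𝓕₁ n ≤ mΩ n := (h12 n).trans (h2 n)
    set g : Fin (I n) → Ω n → ℝ := fun l ω => Fstar n (π n l ω) ω with hg
    -- rewrite g l as a sum of indicators
    have hgl : ∀ l, g l = ∑ m, (π n l ⁻¹' {m}).indicator (Fstar n m) := by
      intro l
      funext ω
      simp only [Finset.sum_apply, hg]
      symm
      rw [Finset.sum_eq_single (π n l ω)]
      · exact Set.indicator_of_mem (Set.mem_preimage.mpr rfl) (Fstar n (π n l ω))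
      · intro b _ hb
        exact Set.indicator_of_notMem
          (fun h => hb (Set.mem_singleton_iff.mp (Set.mem_preimage.mp h)).symm) (Fstar n b)
      · intro h; exact absurd (Finset.mem_univ _) h
    have hπm : ∀ l : Fin (I n), Measurable[mΩ n] (π n l) :=
      fun l => (hπmeas n l).mono (h2 n) le_rfl
    have hAmeas : ∀ (l : Fin (I n)) m, MeasurableSet[mΩ n] (π n l ⁻¹' {m}) :=
      fun l m => hπm l (measurableSet_singleton m)
    have hindint : ∀ (l : Fin (I n)) m,
        Integrable ((π n l ⁻¹' {m}).indicator (Fstar n m)) (μ n) :=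
      fun l m => Integrable.indicator (μ := μ n) (hFstarint n m) (hAmeas l m)
    have hgint : ∀ l, Integrable (g l) (μ n) := by
      intro l; rw [hgl l]
      exact integrable_finset_sum' _ (fun m _ => hindint l m)
    -- conditional expectation of g l
    have hcl : ∀ l, condExp (𝓕₁ n) (μ n) (g l) =ᵐ[μ n]
        fun ω => (M n : ℝ)⁻¹ * ∑ m, condExp (𝓕₁ n) (μ n) (Fstar n m) ω := by
      intro l
      have hAle : MeasurableSpace.comap (π n l) inferInstance ≤ mΩ n :=
        (hπmeas n l).comap_le.trans (h2 n)
      have hindA : Indep (MeasurableSpace.comap (π n l) inferInstance) (𝓕₂ n) (μ n) :=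
        indep_of_indep_of_le_left (hindep n)
          (le_iSup (fun l => MeasurableSpace.comap (π n l) inferInstance) l)
      have hterm : ∀ m : Fin (M n),
          condExp (𝓕₁ n) (μ n) ((π n l ⁻¹' {m}).indicator (Fstar n m)) =ᵐ[μ n]
          fun ω => (M n : ℝ)⁻¹ * condExp (𝓕₁ n) (μ n) (Fstar n m) ω := by
        intro m
        have hA : MeasurableSet[MeasurableSpace.comap (π n l) inferInstance]
            (π n l ⁻¹' {m}) := ⟨{m}, measurableSet_singleton m, rfl⟩
        have := aux_indicator_condexp (h12 n) (h2 n) hAle hA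
          (hFstarint n m) (hFstarmeas n m) hindA
        refine this.trans (Filter.EventuallyEq.of_eq ?_)
        funext ω
        simp only [Pi.smul_apply, smul_eq_mul, hunif n l m]
        rw [ENNReal.toReal_inv, ENNReal.toReal_natCast]
      rw [hgl l]
      refine (condExp_finset_sum (fun m _ => hindint l m) _).trans ?_
      have hall := (ae_all_iff).2 hterm
      filter_upwards [hall] with ω hω
      simp only [Finset.sum_apply]
      rw [Finset.mul_sum]
      exact Finset.sum_congr rfl (fun m _ => hω m)
    -- express big function in smul/sub form
    set u : Ω n → ℝ := ((I n : ℝ)⁻¹) • (∑ l, g l) with hu_def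
    set v : Ω n → ℝ := ((M n : ℝ)⁻¹) • (∑ m, F n m) with hv_def
    have hbig_eq : (fun ω' => Real.sqrt n *
        ((1 / (I n) : ℝ) * ∑ l, Fstar n (π n l ω') ω'
          - (1 / (M n) : ℝ) * ∑ m, F n m ω')) = Real.sqrt n • (u - v) := by
      funext ω'
      simp only [Pi.smul_apply, Pi.sub_apply, hu_def, hv_def, Finset.sum_apply,
        smul_eq_mul, one_div, hg]
    have huint : Integrable u (μ n) :=
      Integrable.smul _ (integrable_finset_sum' _ (fun l _ => hgint l))
    have hvint : Integrable v (μ n) :=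
      Integrable.smul _ (integrable_finset_sum' _ (fun m _ => hFint n m))
    -- condexp of u
    have hu : condExp (𝓕₁ n) (μ n) u =ᵐ[μ n]
        fun ω => (M n : ℝ)⁻¹ * ∑ m, condExp (𝓕₁ n) (μ n) (Fstar n m) ω := by
      refine (condExp_smul ((I n : ℝ)⁻¹) (∑ l, g l) _).trans ?_
      have hsum := condExp_finset_sum (μ := μ n) (m := 𝓕₁ n) (f := g)
        (s := Finset.univ) (fun l _ => hgint l)
      have hall := (ae_all_iff).2 hcl
      filter_upwards [hsum, hall] with ω hω₁ hω₂
      simp only [Pi.smul_apply, smul_eq_mul, hω₁, Finset.sum_apply]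
      rw [Finset.sum_congr rfl (fun l _ => hω₂ l), Finset.sum_const,
        Finset.card_univ, Fintype.card_fin, nsmul_eq_mul]
      field_simp
    -- condexp of v
    have hv : condExp (𝓕₁ n) (μ n) v = v := by
      refine condExp_of_stronglyMeasurable h1 ?_ hvint
      have hsum : StronglyMeasurable[𝓕₁ n] (∑ m, F n m) := by
        rw [show (∑ m : Fin (M n), F n m) = fun a => ∑ m, F n m a from
          funext fun a => Finset.sum_apply _ _ _]
        exact Finset.stronglyMeasurable_fun_sum _ (fun m _ => hFmeas n m)
      exact hsum.const_smul _
    -- assemble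
    rw [hbig_eq]
    have hsmul := condExp_smul (μ := μ n) (m := 𝓕₁ n) (Real.sqrt n) (u - v)
    have hsub := condExp_sub (μ := μ n) (m := 𝓕₁ n) huint hvint
    filter_upwards [hsmul, hsub, hu] with ω h₁ h₂ h₃
    rw [h₁]
    simp only [Pi.smul_apply, smul_eq_mul]
    rw [h₂]
    simp only [Pi.sub_apply, h₃, hv]
    simp only [hv_def, Pi.smul_apply, Finset.sum_apply, smul_eq_mul]
    rw [Finset.sum_sub_distrib]
    ring
  -- now the convergence argument
  intro ε hε
  have hub : ∀ᶠ n : ℕ in atTop,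
      μ n {ω | ε ≤ abs (condExp (𝓕₁ n) (μ n) (fun ω' => Real.sqrt n *
            ((1 / (I n) : ℝ) * ∑ l, Fstar n (π n l ω') ω'
              - (1 / (M n) : ℝ) * ∑ m, F n m ω')) ω)} ≤
      μ n {ω | ∃ m, ε ≤ (n : ℝ) * abs (condExp (𝓕₁ n) (μ n) (Fstar n m) ω - F n m ω)} := by
    filter_upwards [eventually_ge_atTop 1] with n hn1
    have hM : 0 < M n := lt_of_lt_of_le (hI n) (hIM n)
    have hMpos : (0:ℝ) < (M n : ℝ) := Nat.cast_pos.mpr hM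
    refine measure_mono_ae ?_
    filter_upwards [key n] with ω hkey hmem
    show ∃ m, ε ≤ (n : ℝ) * |condExp (𝓕₁ n) (μ n) (Fstar n m) ω - F n m ω|
    by_contra hcon
    push_neg at hcon
    -- all terms are small
    have hsqrt_le : Real.sqrt n ≤ (n : ℝ) := by
      have h1n : (1:ℝ) ≤ (n:ℝ) := by exact_mod_cast hn1
      nlinarith [Real.sq_sqrt (le_trans zero_le_one h1n), Real.sqrt_nonneg (n:ℝ)]
    have hsmall : ∀ m : Fin (M n),
        Real.sqrt n * |condExp (𝓕₁ n) (μ n) (Fstar n m) ω - F n m ω| < ε := by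
      intro m
      refine lt_of_le_of_lt ?_ (hcon m)
      exact mul_le_mul_of_nonneg_right hsqrt_le (abs_nonneg _)
    have hne : (Finset.univ : Finset (Fin (M n))).Nonempty := by
      haveI : NeZero (M n) := ⟨hM.ne'⟩
      exact Finset.univ_nonempty
    have hsumlt : ∑ m, Real.sqrt n *
        |condExp (𝓕₁ n) (μ n) (Fstar n m) ω - F n m ω| < (M n : ℝ) * ε := by
      calc ∑ m, Real.sqrt n * |condExp (𝓕₁ n) (μ n) (Fstar n m) ω - F n m ω|
          < ∑ _m : Fin (M n), ε :=
            Finset.sum_lt_sum_of_nonempty hne (fun m _ => hsmall m)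
        _ = (M n : ℝ) * ε := by
            rw [Finset.sum_const, Finset.card_univ, Fintype.card_fin, nsmul_eq_mul]
    have : ε < ε := by
      calc ε ≤ |condExp (𝓕₁ n) (μ n) (fun ω' => Real.sqrt n *
              ((1 / (I n) : ℝ) * ∑ l, Fstar n (π n l ω') ω'
                - (1 / (M n) : ℝ) * ∑ m, F n m ω')) ω| := hmem
        _ = |Real.sqrt n * ((M n : ℝ)⁻¹ *
              ∑ m, (condExp (𝓕₁ n) (μ n) (Fstar n m) ω - F n m ω))| := by rw [hkey]
        _ ≤ Real.sqrt n * ((M n : ℝ)⁻¹ *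
              ∑ m, |condExp (𝓕₁ n) (μ n) (Fstar n m) ω - F n m ω|) := by
            rw [abs_mul, abs_mul, abs_of_nonneg (Real.sqrt_nonneg _),
              abs_of_nonneg (inv_nonneg.mpr hMpos.le)]
            refine mul_le_mul_of_nonneg_left (mul_le_mul_of_nonneg_left
              (Finset.abs_sum_le_sum_abs _ _) (inv_nonneg.mpr hMpos.le))
              (Real.sqrt_nonneg _)
        _ = (M n : ℝ)⁻¹ * ∑ m, Real.sqrt n *
              |condExp (𝓕₁ n) (μ n) (Fstar n m) ω - F n m ω| := by
            simp only [Finset.mul_sum]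
            exact Finset.sum_congr rfl (fun m _ => by ring)
        _ < (M n : ℝ)⁻¹ * ((M n : ℝ) * ε) :=
            (mul_lt_mul_iff_right₀ (inv_pos.mpr hMpos)).mpr hsumlt
        _ = ε := by field_simp
    exact lt_irrefl ε this
  refine tendsto_of_tendsto_of_tendsto_of_le_of_le' tendsto_const_nhds (hbias ε hε)
    (Filter.Eventually.of_forall (fun n => zero_le)) hub
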